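/- Let x, y ∈ ℝ^d satisfy |y| > 3|x| and |x| ≥ 1. Then for every t with 0 < t < |y|/(9d|x|), one has (d·t + 2⟨x,y⟩)·√(1+t²) < |x|² + |y|². Hence the map t ↦ k_t(x,y) is strictly increasing on (0, |y|/(9d|x|)). -/

import Mathlib

open scoped RealInnerProductSpace

noncomputable def kker (d : ℕ) (x y : EuclideanSpace ℝ (Fin d)) (t : ℝ) : ℝ :=
  (2 * Real.pi * t) ^ (-(d : ℝ) / 2) * Real.exp (-‖x - y‖ ^ 2 / (2 * t)) *
    Real.exp (-((Real.sqrt (1 + t ^ 2) - 1) / (2 * t)) * (‖x‖ ^ 2 + ‖y‖ ^ 2))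

private lemma kker_hasDerivAt_log (d : ℕ) (Q S : ℝ) (t : ℝ) (ht : 0 < t) :
    HasDerivAt (fun t : ℝ => (-(d:ℝ)/2) * Real.log (2*Real.pi*t)
      + (-Q/2) * t⁻¹
      + (-S/2) * ((Real.sqrt (1 + t ^ 2) - 1) * t⁻¹))
      ((-(d:ℝ)*t + Q - S + S / Real.sqrt (1 + t^2)) / (2*t^2)) t := by
  have htne : t ≠ 0 := ne_of_gt ht
  have hpos : (0:ℝ) < 1 + t ^ 2 := by positivity
  have hsp : 0 < Real.sqrt (1 + t ^ 2) := Real.sqrt_pos.2 hpos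
  have hsq : Real.sqrt (1 + t ^ 2) * Real.sqrt (1 + t ^ 2) = 1 + t ^ 2 :=
    Real.mul_self_sqrt hpos.le
  have h1 : HasDerivAt (fun t : ℝ => Real.log (2*Real.pi*t)) ((2*Real.pi*t)⁻¹ * (2*Real.pi)) t := by
    have := (Real.hasDerivAt_log (by positivity : (2*Real.pi*t) ≠ 0)).comp t
      (((hasDerivAt_id t).const_mul (2*Real.pi)))
    exact this.congr_deriv (by ring)
  have h2 : HasDerivAt (fun t : ℝ => t⁻¹) (-(t^2)⁻¹) t := hasDerivAt_inv htne
  have h3 : HasDerivAt (fun t : ℝ => Real.sqrt (1 + t^2)) (1/(2*Real.sqrt (1+t^2)) * (2*t)) t := by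
    have hu : HasDerivAt (fun t : ℝ => 1 + t^2) (2*t) t := by
      simpa using ((hasDerivAt_pow 2 t).const_add 1)
    exact (Real.hasDerivAt_sqrt (ne_of_gt hpos)).comp t hu
  have h4 : HasDerivAt (fun t : ℝ => (Real.sqrt (1 + t^2) - 1) * t⁻¹)
      ((1/(2*Real.sqrt (1+t^2)) * (2*t)) * t⁻¹ + (Real.sqrt (1 + t^2) - 1) * (-(t^2)⁻¹)) t :=
    (h3.sub_const 1).mul h2
  have := ((h1.const_mul (-(d:ℝ)/2)).add (h2.const_mul (-Q/2))).add (h4.const_mul (-S/2))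
  refine this.congr_deriv ?_
  have hpi : Real.pi ≠ 0 := Real.pi_ne_zero
  field_simp
  linear_combination S * hsq

private lemma kker_eq_exp (d : ℕ) (x y : EuclideanSpace ℝ (Fin d)) (t : ℝ) (ht : 0 < t) :
    kker d x y t = Real.exp ((-(d:ℝ)/2) * Real.log (2*Real.pi*t)
      + (-‖x - y‖ ^ 2/2) * t⁻¹
      + (-(‖x‖ ^ 2 + ‖y‖ ^ 2)/2) * ((Real.sqrt (1 + t ^ 2) - 1) * t⁻¹)) := by
  have h2pt : (0:ℝ) < 2 * Real.pi * t := by positivity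
  rw [kker, Real.rpow_def_of_pos h2pt, ← Real.exp_add, ← Real.exp_add]
  congr 1
  field_simp

/-- If |y| > 3|x| and |x| ≥ 1, then for 0 < t < |y|/(9d|x|) one has
(d·t + 2⟨x,y⟩)√(1+t²) < |x|² + |y|²; hence t ↦ k_t(x,y) is strictly increasing there. -/
theorem stmt7 (d : ℕ) (x y : EuclideanSpace ℝ (Fin d))
    (h1 : 3 * ‖x‖ < ‖y‖) (h2 : 1 ≤ ‖x‖) :
    (∀ t : ℝ, 0 < t → t < ‖y‖ / (9 * d * ‖x‖) →
      ((d : ℝ) * t + 2 * ⟪x, y⟫) * Real.sqrt (1 + t ^ 2) < ‖x‖ ^ 2 + ‖y‖ ^ 2) ∧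
    StrictMonoOn (kker d x y) (Set.Ioo 0 (‖y‖ / (9 * d * ‖x‖))) := by
  have hd : d ≠ 0 := by
    rintro rfl
    have : x = 0 := Subsingleton.elim x 0
    rw [this, norm_zero] at h2; linarith
  have hd1 : (1:ℝ) ≤ d := by exact_mod_cast Nat.one_le_iff_ne_zero.2 hd
  have key : ∀ t : ℝ, 0 < t → t < ‖y‖ / (9 * d * ‖x‖) →
      ((d : ℝ) * t + 2 * ⟪x, y⟫) * Real.sqrt (1 + t ^ 2) < ‖x‖ ^ 2 + ‖y‖ ^ 2 := by
    intro t ht htc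
    set a := ‖x‖; set b := ‖y‖
    have ha : (0:ℝ) < a := lt_of_lt_of_le one_pos h2
    have hb : (0:ℝ) < b := by linarith
    have hI : ⟪x, y⟫ ≤ a * b := real_inner_le_norm x y
    have hden : (0:ℝ) < 9 * d * a := by positivity
    have htb : t * (9 * d * a) < b := (lt_div_iff₀ hden).1 htc
    have hs1 : (1:ℝ) ≤ Real.sqrt (1 + t ^ 2) := by
      have := Real.sqrt_le_sqrt (show (1:ℝ) ≤ 1 + t ^ 2 by nlinarith)
      rwa [Real.sqrt_one] at this
    have hs2 : Real.sqrt (1 + t ^ 2) ≤ 1 + t := by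
      rw [show ((1:ℝ) + t) = Real.sqrt ((1+t)^2) by rw [Real.sqrt_sq (by linarith)]]
      exact Real.sqrt_le_sqrt (by nlinarith)
    have hdt : (d:ℝ) * t < b / 9 := by nlinarith
    have ht9 : t < b / 9 := by nlinarith
    have hb3 : (3:ℝ) < b := by nlinarith
    rcases le_or_gt ((d:ℝ) * t + 2 * ⟪x, y⟫) 0 with hneg | hpos
    · have : ((d : ℝ) * t + 2 * ⟪x, y⟫) * Real.sqrt (1 + t ^ 2) ≤ 0 :=
        mul_nonpos_of_nonpos_of_nonneg hneg (by linarith)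
      nlinarith
    · have h3 : ((d : ℝ) * t + 2 * ⟪x, y⟫) * Real.sqrt (1 + t ^ 2)
          ≤ ((d : ℝ) * t + 2 * (a*b)) * (1 + t) := by
        have := mul_le_mul (by nlinarith : (d:ℝ) * t + 2 * ⟪x,y⟫ ≤ (d:ℝ)*t + 2*(a*b)) hs2
          (by linarith) (by nlinarith)
        linarith
      have hab : 2 * (a * b) ≤ 2 * (b/3) * b := by nlinarith
      have habt : 2 * (a * b) * t ≤ 2 * b^2 / 9 := by nlinarith
      nlinarith [sq_nonneg t, sq_nonneg (b - 3)]
  refine ⟨key, ?_⟩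
  set Q := ‖x - y‖ ^ 2 with hQ
  set S := ‖x‖ ^ 2 + ‖y‖ ^ 2 with hS
  set L : ℝ → ℝ := fun t => (-(d:ℝ)/2) * Real.log (2*Real.pi*t)
      + (-Q/2) * t⁻¹ + (-S/2) * ((Real.sqrt (1 + t ^ 2) - 1) * t⁻¹) with hL
  have hQS : Q = S - 2 * ⟪x, y⟫ := by
    rw [hQ, hS, @norm_sub_sq_real]; ring
  have hLmono : StrictMonoOn L (Set.Ioo 0 (‖y‖ / (9 * d * ‖x‖))) := by
    apply strictMonoOn_of_deriv_pos (convex_Ioo _ _)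
    · intro t ht
      exact (kker_hasDerivAt_log d Q S t ht.1).continuousAt.continuousWithinAt
    · intro t ht
      rw [interior_Ioo] at ht
      rw [(kker_hasDerivAt_log d Q S t ht.1).deriv]
      have hsp : 0 < Real.sqrt (1 + t ^ 2) := Real.sqrt_pos.2 (by positivity)
      have hkey := key t ht.1 ht.2
      have hdiv : (d:ℝ) * t + 2 * ⟪x, y⟫ < S / Real.sqrt (1 + t ^ 2) :=
        (lt_div_iff₀ hsp).2 hkey
      have hnum : 0 < -(d:ℝ)*t + Q - S + S / Real.sqrt (1 + t^2) := by
        rw [hQS]; linarith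
      exact div_pos hnum (by have := ht.1; positivity)
  intro s hs t ht hst
  rw [kker_eq_exp d x y s hs.1, kker_eq_exp d x y t ht.1]
  exact Real.exp_lt_exp.2 (hLmono hs ht hst)
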